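/- Let γ ∈ (0,1) and let k ≥ 1 be an integer. Then the iterated integral ∫_0^1 dt_0 ∫_0^{t_0} dt_1 ⋯ ∫_0^{t_{k−1}} dt_k of t_0^(γ−1) · (∏_{j=1}^{k−1} t_j^(−1)) · t_k^(−γ) is at most (1/(1−γ))^k. -/

import Mathlib

open MeasureTheory ENNReal Set

lemma slice_lintegral (n : ℕ) (g : (Fin (n + 2) → ℝ) → ℝ≥0∞) (hg : Measurable g) :
    ∫⁻ t : Fin (n + 2) → ℝ, g t = ∫⁻ x : ℝ, ∫⁻ y : Fin (n + 1) → ℝ, g (Fin.cons x y) := by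
  have hmp := measurePreserving_piFinSuccAbove (fun _ : Fin (n + 2) => (volume : Measure ℝ)) 0
  set e := MeasurableEquiv.piFinSuccAbove (fun _ : Fin (n + 2) => ℝ) 0 with he
  have hgm : Measurable (fun p : ℝ × (Fin (n+1) → ℝ) => g (e.symm p)) :=
    hg.comp e.symm.measurable
  have h1 : ∫⁻ t : Fin (n + 2) → ℝ, g t
      = ∫⁻ p, g (e.symm p) ∂((volume : Measure ℝ).prod (Measure.pi fun _ : Fin (n+1) => volume)) := by
    have := hmp.lintegral_comp hgm
    simp only [MeasurableEquiv.symm_apply_apply] at this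
    exact this
  have hsymm : ∀ p : ℝ × (Fin (n+1) → ℝ), e.symm p = Fin.cons p.1 p.2 := by
    intro p
    show (MeasurableEquiv.piFinSuccAbove (fun _ : Fin (n + 2) => ℝ) 0).symm p = Fin.cons p.1 p.2
    simp [MeasurableEquiv.piFinSuccAbove, Fin.insertNth_zero', Fin.consEquiv]
  have h2 := lintegral_prod (μ := (volume : Measure ℝ))
      (ν := (Measure.pi fun _ : Fin (n+1) => volume))
      (fun p => g (e.symm p)) hgm.aemeasurable
  rw [h1, h2]
  have hvol : (Measure.pi fun _ : Fin (n+1) => (volume : Measure ℝ)) = volume := rfl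
  rw [hvol]
  simp only [hsymm]

lemma one_dim (γ a : ℝ) (hγ0 : 0 < γ) (hγ1 : γ < 1) (ha : 0 < a) :
    ∫⁻ x in Ioo (0:ℝ) a, ENNReal.ofReal (x ^ (-γ)) = ENNReal.ofReal (a ^ (1 - γ) / (1 - γ)) := by
  have hr : (-1 : ℝ) < -γ := by linarith
  have hint : IntegrableOn (fun x : ℝ => x ^ (-γ)) (Ioo 0 a) := by
    have h := (intervalIntegral.intervalIntegrable_rpow' (a := 0) (b := a) hr).1
    exact h.mono_set Ioo_subset_Ioc_self
  rw [← ofReal_integral_eq_lintegral_ofReal hint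
      (((ae_restrict_mem measurableSet_Ioo).mono fun x hx => Real.rpow_nonneg hx.1.le _))]
  congr 1
  rw [← integral_Ioc_eq_integral_Ioo, ← intervalIntegral.integral_of_le ha.le,
    integral_rpow (Or.inl hr)]
  rw [Real.zero_rpow (by linarith : -γ + 1 ≠ 0)]
  ring_nf

lemma measSet (n : ℕ) (a : ℝ) :
    MeasurableSet {t : Fin (n + 1) → ℝ | StrictAnti t ∧ ∀ i, t i ∈ Set.Ioo (0 : ℝ) a} := by
  rw [Set.setOf_and]
  apply MeasurableSet.inter
  · have : {t : Fin (n + 1) → ℝ | StrictAnti t}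
        = ⋂ (i : Fin (n+1)) (j : Fin (n+1)) (_ : i < j), {t | t j < t i} := by
      ext t
      simp only [mem_setOf_eq, mem_iInter]
      exact ⟨fun h i j hij => h hij, fun h i j hij => h i j hij⟩
    rw [this]
    exact MeasurableSet.iInter fun i => MeasurableSet.iInter fun j =>
      MeasurableSet.iInter fun _ => measurableSet_lt (measurable_pi_apply j) (measurable_pi_apply i)
  · have : {t : Fin (n + 1) → ℝ | ∀ i, t i ∈ Set.Ioo (0 : ℝ) a}
        = ⋂ (i : Fin (n+1)), (fun t => t i) ⁻¹' (Ioo 0 a) := by ext t; simp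
    rw [this]
    exact MeasurableSet.iInter fun i => (measurable_pi_apply i) measurableSet_Ioo

def S (n : ℕ) (a : ℝ) : Set (Fin (n + 1) → ℝ) :=
  {t | StrictAnti t ∧ ∀ i, t i ∈ Set.Ioo (0 : ℝ) a}

lemma mem_cons_iff (n : ℕ) (a x : ℝ) (y : Fin (n + 1) → ℝ) :
    Fin.cons x y ∈ S (n + 1) a ↔ x ∈ Ioo 0 a ∧ y ∈ S n x := by
  constructor
  · rintro ⟨hanti, hmem⟩
    have hx := hmem 0
    rw [Fin.cons_zero] at hx
    refine ⟨hx, fun i j hij => ?_, fun i => ?_⟩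
    · have := hanti (Fin.succ_lt_succ_iff.mpr hij)
      simpa using this
    · refine ⟨by simpa using (hmem i.succ).1, ?_⟩
      have := hanti (Fin.succ_pos i)
      simpa using this
  · rintro ⟨hx, hanti, hmem⟩
    constructor
    · intro i j hij
      refine Fin.cases ?_ ?_ j hij
      · intro h; exact absurd h (Fin.not_lt_zero _)
      · intro j' hj'
        refine Fin.cases ?_ ?_ i hj'
        · intro _; simpa using (hmem j').2
        · intro i' hi'
          have : i' < j' := by
            rwa [Fin.succ_lt_succ_iff] at hi'
          simpa using hanti this
    · intro i
      refine Fin.cases ?_ ?_ i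
      · simpa using hx
      · intro i'
        simp only [Fin.cons_succ]
        exact ⟨(hmem i').1, lt_trans (hmem i').2 hx.2⟩

lemma prod_cons_eq (n : ℕ) (x : ℝ) (y : Fin (n + 1) → ℝ) :
    (∏ j : Fin (n + 2), if (j : ℕ) < n + 1 then (Fin.cons x y j)⁻¹ else 1)
      = x⁻¹ * ∏ j : Fin (n + 1), if (j : ℕ) < n then (y j)⁻¹ else 1 := by
  rw [Fin.prod_univ_succ]
  congr 1
  · simp

lemma cons_last (n : ℕ) (x : ℝ) (y : Fin (n + 1) → ℝ) :
    (Fin.cons x y : Fin (n + 2) → ℝ) (Fin.last (n + 1)) = y (Fin.last n) := by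
  have : Fin.last (n + 1) = (Fin.last n).succ := (Fin.succ_last n).symm
  rw [this, Fin.cons_succ]

lemma measF (n : ℕ) (γ : ℝ) :
    Measurable (fun t : Fin (n + 1) → ℝ =>
      ENNReal.ofReal ((∏ j : Fin (n + 1), if (j : ℕ) < n then (t j)⁻¹ else 1)
        * t (Fin.last n) ^ (-γ))) := by
  apply ENNReal.measurable_ofReal.comp
  apply Measurable.mul
  · apply Finset.measurable_prod
    intro j _
    by_cases h : (j : ℕ) < n
    · simp only [h, if_true]
      exact (measurable_pi_apply (X := fun _ : Fin (n+1) => ℝ) j).inv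
    · simp only [h, if_false]
      exact measurable_const
  · exact (measurable_pi_apply (X := fun _ : Fin (n+1) => ℝ) (Fin.last n)).pow measurable_const

lemma measSetS (n : ℕ) (a : ℝ) : MeasurableSet (S n a) := measSet n a

lemma aux_bound (γ : ℝ) (hγ0 : 0 < γ) (hγ1 : γ < 1) :
    ∀ (n : ℕ) (a : ℝ), 0 < a →
    ∫⁻ t in S n a,
        ENNReal.ofReal ((∏ j : Fin (n + 1), if (j : ℕ) < n then (t j)⁻¹ else 1)
          * t (Fin.last n) ^ (-γ))
      ≤ ENNReal.ofReal (a ^ (1 - γ)) * (ENNReal.ofReal (1 / (1 - γ))) ^ (n + 1) := by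
  have h1γ : (0:ℝ) < 1 - γ := by linarith
  intro n
  induction n with
  | zero =>
    intro a ha
    have hset : S 0 a = (fun t : Fin 1 → ℝ => t 0) ⁻¹' (Ioo 0 a) := by
      ext t
      simp only [S, mem_setOf_eq, mem_preimage]
      constructor
      · rintro ⟨_, h⟩; exact h 0
      · intro h
        refine ⟨fun i j hij => absurd (Fin.lt_def.mp hij) (by omega), fun i => ?_⟩
        have hi0 : i = 0 := Fin.ext (by omega)
        rwa [hi0]
    have hfun : ∀ t : Fin 1 → ℝ,
        ENNReal.ofReal ((∏ j : Fin 1, if (j : ℕ) < 0 then (t j)⁻¹ else 1)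
          * t (Fin.last 0) ^ (-γ)) = ENNReal.ofReal ((t 0) ^ (-γ)) := by
      intro t; simp
    apply le_of_eq
    simp only [hset, hfun]
    have hmp := measurePreserving_funUnique (volume : Measure ℝ) (Fin 1)
    have hemb : MeasurableEmbedding (MeasurableEquiv.funUnique (Fin 1) ℝ) :=
      (MeasurableEquiv.funUnique (Fin 1) ℝ).measurableEmbedding
    have heq : ∀ t : Fin 1 → ℝ, (MeasurableEquiv.funUnique (Fin 1) ℝ) t = t 0 := fun t => rfl
    have := hmp.setLIntegral_comp_preimage_emb hemb
      (fun x : ℝ => ENNReal.ofReal (x ^ (-γ))) (Ioo 0 a)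
    rw [show ((fun t : Fin 1 → ℝ => t 0) ⁻¹' (Ioo 0 a))
        = (MeasurableEquiv.funUnique (Fin 1) ℝ) ⁻¹' (Ioo 0 a) from rfl]
    calc ∫⁻ t in (MeasurableEquiv.funUnique (Fin 1) ℝ) ⁻¹' (Ioo 0 a),
            ENNReal.ofReal ((t 0) ^ (-γ)) ∂volume
        = ∫⁻ x in Ioo 0 a, ENNReal.ofReal (x ^ (-γ)) := this
      _ = ENNReal.ofReal (a ^ (1 - γ) / (1 - γ)) := one_dim γ a hγ0 hγ1 ha
      _ = ENNReal.ofReal (a ^ (1 - γ)) * (ENNReal.ofReal (1 / (1 - γ))) ^ (0 + 1) := by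
          rw [pow_one, ← ENNReal.ofReal_mul (Real.rpow_nonneg ha.le _)]
          congr 1
          field_simp
  | succ n ih =>
    intro a ha
    set c := ENNReal.ofReal (1 / (1 - γ)) with hc
    set gn := fun y : Fin (n + 1) → ℝ =>
      ENNReal.ofReal ((∏ j : Fin (n + 1), if (j : ℕ) < n then (y j)⁻¹ else 1)
        * y (Fin.last n) ^ (-γ)) with hgn
    set g := fun t : Fin (n + 2) → ℝ =>
      ENNReal.ofReal ((∏ j : Fin (n + 2), if (j : ℕ) < n + 1 then (t j)⁻¹ else 1)
        * t (Fin.last (n + 1)) ^ (-γ)) with hg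
    have hgm : Measurable g := measF (n + 1) γ
    have hgnm : Measurable gn := measF n γ
    have hslice := slice_lintegral n ((S (n + 1) a).indicator g)
      (hgm.indicator (measSetS (n + 1) a))
    have step2 : ∀ x : ℝ, (∫⁻ y, (S (n + 1) a).indicator g (Fin.cons x y))
        = (Ioo 0 a).indicator
            (fun x' => ENNReal.ofReal x'⁻¹ * ∫⁻ y in S n x', gn y) x := by
      intro x
      by_cases hx : x ∈ Ioo 0 a
      · rw [indicator_of_mem hx, ← lintegral_indicator (measSetS n x) gn,
          ← lintegral_const_mul' _ _ ENNReal.ofReal_ne_top]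
        congr 1 with y
        by_cases hy : y ∈ S n x
        · rw [indicator_of_mem ((mem_cons_iff n a x y).mpr ⟨hx, hy⟩),
            indicator_of_mem hy, hg, hgn]
          simp only []
          rw [prod_cons_eq, cons_last, mul_assoc,
            ENNReal.ofReal_mul (inv_nonneg.mpr hx.1.le)]
        · rw [indicator_of_notMem
            (fun hmem => hy ((mem_cons_iff n a x y).mp hmem).2),
            indicator_of_notMem hy, mul_zero]
      · rw [indicator_of_notMem hx]
        have hz : ∀ y : Fin (n + 1) → ℝ, (S (n + 1) a).indicator g (Fin.cons x y) = 0 :=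
          fun y => indicator_of_notMem
            (fun hmem => hx ((mem_cons_iff n a x y).mp hmem).1) _
        simp [hz]
    calc ∫⁻ t in S (n + 1) a, g t
        = ∫⁻ t, (S (n + 1) a).indicator g t := (lintegral_indicator (measSetS (n + 1) a) g).symm
      _ = ∫⁻ x : ℝ, ∫⁻ y : Fin (n + 1) → ℝ, (S (n + 1) a).indicator g (Fin.cons x y) := hslice
      _ = ∫⁻ x in Ioo 0 a, ENNReal.ofReal x⁻¹ * ∫⁻ y in S n x, gn y := by
          simp only [step2]
          exact lintegral_indicator measurableSet_Ioo _
      _ ≤ ∫⁻ x in Ioo 0 a, ENNReal.ofReal x⁻¹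
            * (ENNReal.ofReal (x ^ (1 - γ)) * c ^ (n + 1)) := by
          apply setLIntegral_mono
          · apply Measurable.fun_mul
            · exact ENNReal.measurable_ofReal.comp measurable_inv
            · exact ((ENNReal.measurable_ofReal.comp (measurable_id.pow measurable_const)).mul
                measurable_const)
          · intro x hx
            exact mul_le_mul_right (ih x hx.1) _
      _ = ∫⁻ x in Ioo 0 a, ENNReal.ofReal (x ^ (-γ)) * c ^ (n + 1) := by
          apply setLIntegral_congr_fun measurableSet_Ioo
          intro x hx
          beta_reduce
          rw [← mul_assoc, ← ENNReal.ofReal_mul (inv_nonneg.mpr hx.1.le)]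
          congr 2
          rw [← Real.rpow_neg_one x, ← Real.rpow_add hx.1]
          ring_nf
      _ = (∫⁻ x in Ioo 0 a, ENNReal.ofReal (x ^ (-γ))) * c ^ (n + 1) := by
          rw [lintegral_mul_const' _ _ (pow_ne_top ENNReal.ofReal_ne_top)]
      _ = ENNReal.ofReal (a ^ (1 - γ) / (1 - γ)) * c ^ (n + 1) := by
          rw [one_dim γ a hγ0 hγ1 ha]
      _ = ENNReal.ofReal (a ^ (1 - γ)) * c ^ (n + 1 + 1) := by
          rw [show a ^ (1 - γ) / (1 - γ) = a ^ (1 - γ) * (1 / (1 - γ)) by ring,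
            ENNReal.ofReal_mul (Real.rpow_nonneg ha.le _), ← hc]
          ring

/-- Lemma A.5: for `γ ∈ (0,1)` and `k ≥ 1`, the iterated integral
`∫_0^1 dt_0 ∫_0^{t_0} dt_1 ⋯ ∫_0^{t_{k-1}} dt_k  t_0^(γ-1) (∏_{j=1}^{k-1} t_j^(-1)) t_k^(-γ)`
(i.e. the integral over the region `0 < t_k < ⋯ < t_1 < t_0 < 1`)
is at most `(1/(1-γ))^k`. -/
theorem decreasing_skeleton_integral_bound (γ : ℝ) (hγ : γ ∈ Set.Ioo (0 : ℝ) 1)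
    (k : ℕ) (hk : 1 ≤ k) :
    ∫⁻ t in {t : Fin (k + 1) → ℝ | StrictAnti t ∧ ∀ i, t i ∈ Set.Ioo (0 : ℝ) 1},
        ENNReal.ofReal (t 0 ^ (γ - 1) *
          (∏ j : Fin (k + 1), if 0 < (j : ℕ) ∧ (j : ℕ) < k then (t j)⁻¹ else 1) *
          t (Fin.last k) ^ (-γ)) ≤
      ENNReal.ofReal ((1 / (1 - γ)) ^ k) := by
  obtain ⟨hγ0, hγ1⟩ := hγ
  obtain ⟨n, rfl⟩ : ∃ n, k = n + 1 := ⟨k - 1, by omega⟩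
  have h1γ : (0:ℝ) < 1 - γ := by linarith
  set c := ENNReal.ofReal (1 / (1 - γ)) with hc
  set gn := fun y : Fin (n + 1) → ℝ =>
    ENNReal.ofReal ((∏ j : Fin (n + 1), if (j : ℕ) < n then (y j)⁻¹ else 1)
      * y (Fin.last n) ^ (-γ)) with hgn
  set g := fun t : Fin (n + 2) → ℝ =>
    ENNReal.ofReal (t 0 ^ (γ - 1) *
      (∏ j : Fin (n + 2), if 0 < (j : ℕ) ∧ (j : ℕ) < n + 1 then (t j)⁻¹ else 1) *
      t (Fin.last (n + 1)) ^ (-γ)) with hg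
  have hgm : Measurable g := by
    apply ENNReal.measurable_ofReal.comp
    apply Measurable.mul
    · apply Measurable.mul
      · exact (measurable_pi_apply (X := fun _ : Fin (n+2) => ℝ) 0).pow measurable_const
      · apply Finset.measurable_prod
        intro j _
        by_cases h : 0 < (j : ℕ) ∧ (j : ℕ) < n + 1
        · simp only [h, if_true]
          exact (measurable_pi_apply (X := fun _ : Fin (n+2) => ℝ) j).inv
        · simp only [h, if_false]
          exact measurable_const
    · exact (measurable_pi_apply (X := fun _ : Fin (n+2) => ℝ) (Fin.last (n+1))).pow
        measurable_const
  have hsetA : {t : Fin (n + 1 + 1) → ℝ | StrictAnti t ∧ ∀ i, t i ∈ Set.Ioo (0 : ℝ) 1}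
      = S (n + 1) 1 := rfl
  have hprod : ∀ (x : ℝ) (y : Fin (n + 1) → ℝ),
      (∏ j : Fin (n + 2), if 0 < (j : ℕ) ∧ (j : ℕ) < n + 1
          then ((Fin.cons x y : Fin (n+2) → ℝ) j)⁻¹ else 1)
        = ∏ j : Fin (n + 1), if (j : ℕ) < n then (y j)⁻¹ else 1 := by
    intro x y
    rw [Fin.prod_univ_succ]
    rw [show (if 0 < ((0 : Fin (n+2)) : ℕ) ∧ ((0 : Fin (n+2)) : ℕ) < n + 1
        then ((Fin.cons x y : Fin (n+2) → ℝ) 0)⁻¹ else 1) = 1 by simp, one_mul]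
    apply Finset.prod_congr rfl
    intro j _
    simp [Fin.val_succ, Nat.succ_lt_succ_iff]
  have step2 : ∀ x : ℝ, (∫⁻ y, (S (n + 1) 1).indicator g (Fin.cons x y))
      = (Ioo (0:ℝ) 1).indicator
          (fun x' => ENNReal.ofReal (x' ^ (γ - 1)) * ∫⁻ y in S n x', gn y) x := by
    intro x
    by_cases hx : x ∈ Ioo (0:ℝ) 1
    · rw [indicator_of_mem hx, ← lintegral_indicator (measSetS n x) gn,
        ← lintegral_const_mul' _ _ ENNReal.ofReal_ne_top]
      congr 1 with y
      by_cases hy : y ∈ S n x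
      · rw [indicator_of_mem ((mem_cons_iff n 1 x y).mpr ⟨hx, hy⟩), indicator_of_mem hy,
          hg, hgn]
        simp only []
        rw [hprod, cons_last, Fin.cons_zero, mul_assoc,
          ENNReal.ofReal_mul (Real.rpow_nonneg hx.1.le _)]
      · rw [indicator_of_notMem (fun hmem => hy ((mem_cons_iff n 1 x y).mp hmem).2),
          indicator_of_notMem hy, mul_zero]
    · rw [indicator_of_notMem hx]
      have hz : ∀ y : Fin (n + 1) → ℝ, (S (n + 1) 1).indicator g (Fin.cons x y) = 0 :=
        fun y => indicator_of_notMem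
          (fun hmem => hx ((mem_cons_iff n 1 x y).mp hmem).1) _
      simp [hz]
  rw [hsetA]
  calc ∫⁻ t in S (n + 1) 1, g t
      = ∫⁻ t, (S (n + 1) 1).indicator g t := (lintegral_indicator (measSetS (n + 1) 1) g).symm
    _ = ∫⁻ x : ℝ, ∫⁻ y : Fin (n + 1) → ℝ, (S (n + 1) 1).indicator g (Fin.cons x y) :=
        slice_lintegral n _ (hgm.indicator (measSetS (n + 1) 1))
    _ = ∫⁻ x in Ioo (0:ℝ) 1, ENNReal.ofReal (x ^ (γ - 1)) * ∫⁻ y in S n x, gn y := by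
        simp only [step2]
        exact lintegral_indicator measurableSet_Ioo _
    _ ≤ ∫⁻ x in Ioo (0:ℝ) 1, ENNReal.ofReal (x ^ (γ - 1))
          * (ENNReal.ofReal (x ^ (1 - γ)) * c ^ (n + 1)) := by
        apply setLIntegral_mono
        · exact (ENNReal.measurable_ofReal.comp (measurable_id.pow measurable_const)).mul
            ((ENNReal.measurable_ofReal.comp (measurable_id.pow measurable_const)).mul
              measurable_const)
        · intro x hx
          exact mul_le_mul_right (aux_bound γ hγ0 hγ1 n x hx.1) _
    _ = ∫⁻ _ in Ioo (0:ℝ) 1, c ^ (n + 1) := by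
        apply setLIntegral_congr_fun measurableSet_Ioo
        intro x hx
        beta_reduce
        rw [← mul_assoc, ← ENNReal.ofReal_mul (Real.rpow_nonneg hx.1.le _),
          ← Real.rpow_add hx.1]
        norm_num
    _ = c ^ (n + 1) * volume (Ioo (0:ℝ) 1) := setLIntegral_const _ _
    _ = c ^ (n + 1) := by
        rw [Real.volume_Ioo]
        norm_num
    _ = ENNReal.ofReal ((1 / (1 - γ)) ^ (n + 1)) := by
        rw [hc, ← ENNReal.ofReal_pow (by positivity)]
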